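/- For every finite bipartite graph G, the graph Π(G) is a directed path graph. -/

import Mathlib

/-- A directed path model of a graph `G`: a finite oriented tree (an orientation `arc` of a
tree) together with, for each vertex `v` of `G`, a directed path in the tree (a sequence of
pairwise distinct nodes consecutively joined by arcs), such that distinct vertices of `G`
are adjacent iff their paths share a node. -/
structure DPModel (V : Type) (G : SimpleGraph V) where
  N : Type
  fintypeN : Fintype N
  arc : N → N → Prop
  arc_irrefl : ∀ x : N, ¬ arc x x
  arc_asymm : ∀ x y : N, arc x y → ¬ arc y x
  isTree : (SimpleGraph.fromRel arc).IsTree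
  len : V → ℕ
  path : (v : V) → Fin (len v + 1) → N
  path_inj : ∀ v : V, Function.Injective (path v)
  path_arc : ∀ (v : V) (i : Fin (len v)), arc (path v i.castSucc) (path v i.succ)
  adj_iff : ∀ u v : V, u ≠ v →
    (G.Adj u v ↔ ∃ z : N, (∃ i, path u i = z) ∧ (∃ j, path v j = z))

/-- Vertex set of `Π(G)` for a bipartite graph with parts `A`, `B` and edge relation `E`:
the two sides plus one vertex for each edge. -/
abbrev PiV (A B : Type) (E : A → B → Prop) : Type := A ⊕ B ⊕ {p : A × B // E p.1 p.2}

/-- The edges of `Π(G)`: each edge-vertex `x_{ab}` is adjacent to `a`, to `b`, and to every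
other edge-vertex; there are no other edges. -/
def PiRel {A B : Type} (E : A → B → Prop) : PiV A B E → PiV A B E → Prop
  | Sum.inr (Sum.inr e), Sum.inl a => e.1.1 = a
  | Sum.inr (Sum.inr e), Sum.inr (Sum.inl b) => e.1.2 = b
  | Sum.inr (Sum.inr _), Sum.inr (Sum.inr _) => True
  | _, _ => False

/-- The graph `Π(G)`. -/
def PiGraph {A B : Type} (E : A → B → Prop) : SimpleGraph (PiV A B E) :=
  SimpleGraph.fromRel (PiRel E)

namespace Stmt7Aux

variable {A B : Type} {E : A → B → Prop}

/-- The star arc relation on `Option (A ⊕ B)`: leaves for `A` point to the center `none`,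
which points to leaves for `B`. -/
def arc (x y : Option (A ⊕ B)) : Prop :=
  ((∃ a : A, x = some (Sum.inl a)) ∧ y = none) ∨
    (x = none ∧ ∃ b : B, y = some (Sum.inr b))

lemma arc_irrefl (x : Option (A ⊕ B)) : ¬ arc x x := by
  rintro (⟨⟨a, rfl⟩, h⟩ | ⟨rfl, b, h⟩) <;> simp at h

lemma arc_asymm (x y : Option (A ⊕ B)) (h : arc x y) : ¬ arc y x := by
  rintro (⟨⟨a, rfl⟩, rfl⟩ | ⟨rfl, b, rfl⟩) <;>
    rcases h with ⟨⟨a', h1⟩, h2⟩ | ⟨h1, b', h2⟩ <;> simp_all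

lemma adj_some {u : A ⊕ B} {y : Option (A ⊕ B)}
    (h : (SimpleGraph.fromRel (arc (A := A) (B := B))).Adj (some u) y) : y = none := by
  rw [SimpleGraph.fromRel_adj] at h
  rcases h.2 with ⟨⟨a, h1⟩, h2⟩ | ⟨h1, _⟩ | ⟨⟨a, h1⟩, h2⟩ | ⟨h1, _⟩ <;> simp_all

lemma walk_mem (u : A ⊕ B)
    (p : (SimpleGraph.fromRel (arc (A := A) (B := B))).Walk (some u) none) :
    s(some u, (none : Option (A ⊕ B))) ∈ p.edges := by
  cases p with
  | cons h q =>
    have := adj_some h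
    subst this
    exact List.mem_cons_self

lemma isTree : (SimpleGraph.fromRel (arc (A := A) (B := B))).IsTree := by
  constructor
  · rw [SimpleGraph.connected_iff]
    refine ⟨?_, ⟨none⟩⟩
    have key : ∀ x, (SimpleGraph.fromRel (arc (A := A) (B := B))).Reachable x none := by
      intro x
      rcases x with _ | (a | b)
      · exact SimpleGraph.Reachable.refl _
      · exact SimpleGraph.Adj.reachable
          (by rw [SimpleGraph.fromRel_adj]; exact ⟨by simp, Or.inl (Or.inl ⟨⟨a, rfl⟩, rfl⟩)⟩)
      · exact SimpleGraph.Adj.reachable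
          (by rw [SimpleGraph.fromRel_adj]; exact ⟨by simp, Or.inr (Or.inr ⟨rfl, b, rfl⟩)⟩)
    intro x y
    exact (key x).trans (key y).symm
  · rw [SimpleGraph.isAcyclic_iff_forall_adj_isBridge]
    intro v w hvw
    rw [SimpleGraph.isBridge_iff_adj_and_forall_walk_mem_edges]
    refine fun p => ?_
    have hcase : (∃ u, v = some u ∧ w = none) ∨ (v = none ∧ ∃ u, w = some u) := by
      rw [SimpleGraph.fromRel_adj] at hvw
      rcases hvw with ⟨hne, (⟨⟨a, rfl⟩, rfl⟩ | ⟨rfl, b, rfl⟩) | (⟨⟨a, rfl⟩, rfl⟩ | ⟨rfl, b, rfl⟩)⟩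
      · exact Or.inl ⟨_, rfl, rfl⟩
      · exact Or.inr ⟨rfl, _, rfl⟩
      · exact Or.inr ⟨rfl, _, rfl⟩
      · exact Or.inl ⟨_, rfl, rfl⟩
    rcases hcase with ⟨u, rfl, rfl⟩ | ⟨rfl, u, rfl⟩
    · exact walk_mem u p
    · have := walk_mem u p.reverse
      rw [SimpleGraph.Walk.edges_reverse, List.mem_reverse, Sym2.eq_swap] at this
      exact this

/-- Path lengths: single nodes for side vertices, length-2 paths for edge vertices. -/
def len : PiV A B E → ℕ
  | Sum.inr (Sum.inr _) => 2
  | _ => 0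

/-- The directed paths: `a ↦ {α_a}`, `b ↦ {β_b}`, `x_{ab} ↦ α_a → c → β_b`. -/
def path : (v : PiV A B E) → Fin (len v + 1) → Option (A ⊕ B)
  | Sum.inl a, _ => some (Sum.inl a)
  | Sum.inr (Sum.inl b), _ => some (Sum.inr b)
  | Sum.inr (Sum.inr e), i => ![some (Sum.inl e.1.1), none, some (Sum.inr e.1.2)] i

lemma path_inj (v : PiV A B E) : Function.Injective (path v) := by
  rcases v with a | b | e
  · intro i j _; exact @Subsingleton.elim (Fin 1) _ i j
  · intro i j _; exact @Subsingleton.elim (Fin 1) _ i j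
  · intro i j h
    fin_cases i <;> fin_cases j <;> simp_all [path, len, Fin.ext_iff]

lemma path_arc (v : PiV A B E) (i : Fin (len v)) :
    arc (path v i.castSucc) (path v i.succ) := by
  rcases v with a | b | e
  · exact i.elim0
  · exact i.elim0
  · fin_cases i
    · exact Or.inl ⟨⟨_, rfl⟩, rfl⟩
    · exact Or.inr ⟨rfl, _, rfl⟩

lemma adj_iff (u v : PiV A B E) (huv : u ≠ v) :
    ((PiGraph E).Adj u v ↔ ∃ z : Option (A ⊕ B),
      (∃ i, path u i = z) ∧ (∃ j, path v j = z)) := by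
  rcases u with a | b | e <;> rcases v with a' | b' | e' <;>
    simp_all [PiGraph, PiRel, path, len, SimpleGraph.fromRel_adj, Fin.exists_fin_succ,
      Fin.exists_fin_two, Subtype.ext_iff, Prod.ext_iff, eq_comm]

end Stmt7Aux

/-- for every finite bipartite graph `G`, the graph `Π(G)` is a directed path
graph. -/
theorem stmt7 (A B : Type) [Fintype A] [Fintype B] (E : A → B → Prop) :
    Nonempty (DPModel (PiV A B E) (PiGraph E)) := by
  exact ⟨{
    N := Option (A ⊕ B)
    fintypeN := inferInstance
    arc := Stmt7Aux.arc
    arc_irrefl := Stmt7Aux.arc_irrefl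
    arc_asymm := Stmt7Aux.arc_asymm
    isTree := Stmt7Aux.isTree
    len := Stmt7Aux.len
    path := Stmt7Aux.path
    path_inj := Stmt7Aux.path_inj
    path_arc := Stmt7Aux.path_arc
    adj_iff := Stmt7Aux.adj_iff }⟩
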